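/- Let p ∈ (0,1) and let F, G be arbitrary cumulative distribution functions (no moment assumptions). Define the extended gap functional Γ*_p(F,G) = ∫_{F^{-1}(p)}^{G^{-1}(p)} (p − G(x)) dx (an oriented integral, equal to ∫_{G^{-1}(p)}^{F^{-1}(p)} (G(x) − p) dx when F^{-1}(p) ≥ G^{-1}(p)). If F is continuous at the point x_p := F^{-1}(p), then 0 ≤ Γ*_p(F,G) ≤ (F^{-1}(p) − G^{-1}(p)) (G(x_p) − F(x_p)). -/

import Mathlib

open MeasureTheory ProbabilityTheory Filter Set

/-- The cumulative distribution function of a probability measure `μ` on `ℝ`. -/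
noncomputable def cdfOf (μ : Measure ℝ) : ℝ → ℝ := fun x => (μ (Iic x)).toReal

/-- The quantile function of a cdf `F`: `F⁻¹(p) = inf {x : F x ≥ p}`. -/
noncomputable def qtl (F : ℝ → ℝ) (p : ℝ) : ℝ := sInf {x | p ≤ F x}

/-- The extended "gap" functional `Γ*_p(F,G) = ∫_{F⁻¹(p)}^{G⁻¹(p)} (p − G(x)) dx`,
an oriented (interval) integral. -/
noncomputable def gapStar (p : ℝ) (F G : ℝ → ℝ) : ℝ :=
  ∫ x in (qtl F p)..(qtl G p), (p - G x)

section aux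
variable (μ : Measure ℝ) [IsProbabilityMeasure μ] {p : ℝ}

lemma cdfOf_eq : cdfOf μ = cdf μ := by
  funext x; rw [cdfOf, cdf_eq_real, measureReal_def]

lemma cdfOf_mono : Monotone (cdfOf μ) := by rw [cdfOf_eq]; exact monotone_cdf μ

lemma qtl_set_nonempty (hp1 : p < 1) : {x | p ≤ cdfOf μ x}.Nonempty := by
  rw [cdfOf_eq]
  obtain ⟨x, hx⟩ := ((tendsto_cdf_atTop μ).eventually (eventually_gt_nhds hp1)).exists
  exact ⟨x, hx.le⟩

lemma qtl_set_bddBelow (hp0 : 0 < p) : BddBelow {x | p ≤ cdfOf μ x} := by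
  rw [cdfOf_eq]
  obtain ⟨y, hy⟩ := eventually_atBot.mp
    ((tendsto_cdf_atBot μ).eventually (eventually_lt_nhds hp0))
  exact ⟨y, fun x hx => le_of_not_gt fun h => absurd hx (not_le.mpr (hy x h.le))⟩

/-- For `x < qtl`, `cdfOf μ x < p`. -/
lemma lt_of_lt_qtl (hp0 : 0 < p) {x : ℝ} (hx : x < qtl (cdfOf μ) p) : cdfOf μ x < p := by
  by_contra h
  exact absurd (csInf_le (qtl_set_bddBelow μ hp0) (not_lt.mp h)) (not_le.mpr hx)

/-- `p ≤ cdfOf μ (qtl (cdfOf μ) p)`. -/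
lemma le_cdf_qtl (hp0 : 0 < p) (hp1 : p < 1) : p ≤ cdfOf μ (qtl (cdfOf μ) p) := by
  set xq := qtl (cdfOf μ) p with hxq
  have hright : ContinuousWithinAt (cdfOf μ) (Ici xq) xq := by
    rw [cdfOf_eq]; exact (cdf μ).right_continuous xq
  have h1 : ∀ x ∈ Ioi xq, p ≤ cdfOf μ x := by
    intro x hx
    obtain ⟨s, hs, hsx⟩ := (csInf_lt_iff (qtl_set_bddBelow μ hp0) (qtl_set_nonempty μ hp1)).mp hx
    exact le_trans hs (cdfOf_mono μ hsx.le)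
  have : Tendsto (cdfOf μ) (nhdsWithin xq (Ioi xq)) (nhds (cdfOf μ xq)) :=
    hright.tendsto.mono_left (nhdsWithin_mono _ Ioi_subset_Ici_self)
  exact ge_of_tendsto this (eventually_nhdsWithin_of_forall h1)

/-- If `cdfOf μ` is continuous at the quantile then its value there is `p`. -/
lemma cdf_qtl_eq (hp0 : 0 < p) (hp1 : p < 1)
    (hcont : ContinuousAt (cdfOf μ) (qtl (cdfOf μ) p)) :
    cdfOf μ (qtl (cdfOf μ) p) = p := by
  refine le_antisymm ?_ (le_cdf_qtl μ hp0 hp1)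
  set xq := qtl (cdfOf μ) p with hxq
  have h1 : ∀ x ∈ Iio xq, cdfOf μ x ≤ p := fun x hx => (lt_of_lt_qtl μ hp0 hx).le
  have : Tendsto (cdfOf μ) (nhdsWithin xq (Iio xq)) (nhds (cdfOf μ xq)) :=
    hcont.continuousWithinAt.tendsto
  exact le_of_tendsto this (eventually_nhdsWithin_of_forall h1)

end aux

/-- for `p ∈ (0,1)` and arbitrary cdf's `F, G` (no moment assumptions),
if `F` is continuous at `x_p := F⁻¹(p)` then
`0 ≤ Γ*_p(F,G) ≤ (F⁻¹(p) − G⁻¹(p)) (G(x_p) − F(x_p))`. -/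
theorem stmt5 (μ ν : Measure ℝ) [IsProbabilityMeasure μ] [IsProbabilityMeasure ν]
    (p : ℝ) (hp : p ∈ Ioo (0 : ℝ) 1)
    (hcont : ContinuousAt (cdfOf μ) (qtl (cdfOf μ) p)) :
    0 ≤ gapStar p (cdfOf μ) (cdfOf ν) ∧
      gapStar p (cdfOf μ) (cdfOf ν) ≤
        (qtl (cdfOf μ) p - qtl (cdfOf ν) p) *
          (cdfOf ν (qtl (cdfOf μ) p) - cdfOf μ (qtl (cdfOf μ) p)) := by
  obtain ⟨hp0, hp1⟩ := hp
  set F := cdfOf μ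
  set G := cdfOf ν
  set xF := qtl F p with hxF
  set xG := qtl G p with hxG
  have hFxF : F xF = p := cdf_qtl_eq μ hp0 hp1 hcont
  have hGmono : Monotone G := cdfOf_mono ν
  have hGlt : ∀ x < xG, G x < p := fun x hx => lt_of_lt_qtl ν hp0 hx
  have hGge : p ≤ G xG := le_cdf_qtl ν hp0 hp1
  have hInt : ∀ a b : ℝ, IntervalIntegrable (fun x => p - G x) volume a b := fun a b =>
    (intervalIntegrable_const).sub hGmono.intervalIntegrable
  rw [hFxF]
  rcases le_total xF xG with hle | hle
  · -- xF ≤ xG : integrand nonneg on Ioo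
    have heq : gapStar p F G = ∫ x in Ioo xF xG, (p - G x) := by
      rw [gapStar, intervalIntegral.integral_of_le hle,
        ← MeasureTheory.integral_Ioc_eq_integral_Ioo]
    have hintOn : IntegrableOn (fun x => p - G x) (Ioo xF xG) volume := by
      have := (hInt xF xG).1
      exact this.mono_set Ioo_subset_Ioc_self
    constructor
    · rw [heq]
      refine MeasureTheory.setIntegral_nonneg measurableSet_Ioo fun x hx => ?_
      have := hGlt x hx.2
      linarith
    · rw [heq]
      have hb : ∫ x in Ioo xF xG, (p - G x) ≤ ∫ x in Ioo xF xG, (p - G xF) := by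
        refine MeasureTheory.setIntegral_mono_on hintOn ((integrableOn_const_iff).mpr ?_)
          measurableSet_Ioo fun x hx => ?_
        · right; exact measure_Ioo_lt_top
        · have := hGmono hx.1.le; linarith
      have hc : ∫ x in Ioo xF xG, (p - G xF) = (xG - xF) * (p - G xF) := by
        simp [Real.volume_Ioo, ENNReal.toReal_ofReal (sub_nonneg.mpr hle), hle]
      nlinarith [hb, hc]
  · -- xG ≤ xF
    have heq : gapStar p F G = ∫ x in Ioo xG xF, (G x - p) := by
      rw [gapStar, intervalIntegral.integral_symm,
        intervalIntegral.integral_of_le hle, ← MeasureTheory.integral_Ioc_eq_integral_Ioo,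
        ← MeasureTheory.integral_neg]
      simp
    have hintOn : IntegrableOn (fun x => G x - p) (Ioo xG xF) volume := by
      have : IntervalIntegrable (fun x => G x - p) volume xG xF :=
        hGmono.intervalIntegrable.sub intervalIntegrable_const
      exact ((intervalIntegrable_iff_integrableOn_Ioc_of_le hle).mp this).mono_set
        Ioo_subset_Ioc_self
    constructor
    · rw [heq]
      refine MeasureTheory.setIntegral_nonneg measurableSet_Ioo fun x hx => ?_
      have : p ≤ G x := le_trans hGge (hGmono hx.1.le)
      linarith
    · rw [heq]
      have hb : ∫ x in Ioo xG xF, (G x - p) ≤ ∫ x in Ioo xG xF, (G xF - p) := by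
        refine MeasureTheory.setIntegral_mono_on hintOn ((integrableOn_const_iff).mpr ?_)
          measurableSet_Ioo fun x hx => ?_
        · right; exact measure_Ioo_lt_top
        · have := hGmono hx.2.le; linarith
      have hc : ∫ x in Ioo xG xF, (G xF - p) = (xF - xG) * (G xF - p) := by
        simp [Real.volume_Ioo, ENNReal.toReal_ofReal (sub_nonneg.mpr hle), hle]
      nlinarith [hb, hc]
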